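/- If the restricted quantified Boolean formula Q is true, then the ∃-player has a winning strategy in the graph game on (G, C, s, R) constructed from Q. -/

import Mathlib

namespace PhutballQBF

/-- A literal: a variable `xₗ` (`pos l`) or its negation `¬xₗ` (`neg l`). -/
inductive Lit where
  | pos (l : ℕ)
  | neg (l : ℕ)
deriving DecidableEq

/-- The index of the variable occurring in a literal. -/
def Lit.var : Lit → ℕ
  | .pos l => l
  | .neg l => l

/-- Evaluation of a literal under a Boolean assignment. -/
def Lit.eval (σ : ℕ → Bool) : Lit → Bool
  | .pos l => σ l
  | .neg l => !(σ l)

/-- Well-formedness of the 3CNF `F = F₁ ∧ ⋯ ∧ F_m`: the literal `l_{i,j}` (for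
`1 ≤ i ≤ m`, `1 ≤ j ≤ 3`) mentions one of the variables `x₁, …, xₙ`. -/
def LitWF (n m : ℕ) (lit : ℕ → ℕ → Lit) : Prop :=
  ∀ i j, 1 ≤ i → i ≤ m → 1 ≤ j → j ≤ 3 → 1 ≤ (lit i j).var ∧ (lit i j).var ≤ n

/-- The clause `Fᵢ = (l_{i,1} ∨ l_{i,2} ∨ l_{i,3})` evaluates to true under `σ`. -/
def ClauseTrue (lit : ℕ → ℕ → Lit) (i : ℕ) (σ : ℕ → Bool) : Prop :=
  ∃ j, 1 ≤ j ∧ j ≤ 3 ∧ (lit i j).eval σ = true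

/-- The 3CNF formula `F = F₁ ∧ ⋯ ∧ F_m` evaluates to true under `σ`. -/
def FTrue (lit : ℕ → ℕ → Lit) (m : ℕ) (σ : ℕ → Bool) : Prop :=
  ∀ i, 1 ≤ i → i ≤ m → ClauseTrue lit i σ

/-- `QAux P i k σ`: the quantified statement with `k` variables `x_i, …, x_{i+k-1}`
still to be quantified (existentially when the index is odd, universally when even),
the remaining variables having the values recorded in `σ`. -/
def QAux (P : (ℕ → Bool) → Prop) : ℕ → ℕ → (ℕ → Bool) → Prop
  | _, 0, σ => P σ
  | i, k + 1, σ =>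
      if i % 2 = 1 then ∃ b, QAux P (i + 1) k (Function.update σ i b)
      else ∀ b, QAux P (i + 1) k (Function.update σ i b)

/-- Truth of the restricted quantified Boolean formula
`Q = ∃x₁ ∀x₂ ∃x₃ ⋯ ∀xₙ F(x₁, …, xₙ)`. -/
def QTrue (n m : ℕ) (lit : ℕ → ℕ → Lit) : Prop :=
  QAux (FTrue lit m) 1 n (fun _ => false)

/-- The vertices of the graph `G` built from `Q` (with natural-number indices;
`g 0` is the extra vertex `g₀`). -/
inductive Vtx where
  | a (i : ℕ) | b (i : ℕ) | c (i : ℕ) | d (i : ℕ) | e (i : ℕ) | f (i : ℕ) | g (i : ℕ)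
  | x (i : ℕ) | y (i : ℕ) | z (i : ℕ) | w (i : ℕ) (j : ℕ)
deriving DecidableEq

/-- A directed edge. -/
abbrev Edge := Vtx × Vtx

/-- The edge set `E(G)` of the graph `G` constructed from `Q` (with `n` variables and
`m` clauses): the variable components `G(xᵢ)`, the connecting edges `(gᵢ, aᵢ₊₁)` for
`i = 0, …, n-1`, the edge `(gₙ, x₁)`, and the formula component `G(F)`. -/
def EG (n m : ℕ) : Set Edge :=
  { p | (∃ i, 1 ≤ i ∧ i ≤ n ∧
          (p = (Vtx.a i, Vtx.b i) ∨ p = (Vtx.a i, Vtx.c i) ∨ p = (Vtx.b i, Vtx.e i) ∨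
           p = (Vtx.c i, Vtx.f i) ∨ p = (Vtx.e i, Vtx.d i) ∨ p = (Vtx.f i, Vtx.d i) ∨
           p = (Vtx.d i, Vtx.g i))) ∨
        (∃ i, i ≤ n - 1 ∧ p = (Vtx.g i, Vtx.a (i + 1))) ∨
        p = (Vtx.g n, Vtx.x 1) ∨
        (∃ i, 1 ≤ i ∧ i ≤ m ∧
          (p = (Vtx.x i, Vtx.y i) ∨ p = (Vtx.y i, Vtx.z i) ∨ p = (Vtx.z i, Vtx.w i 1) ∨
           p = (Vtx.w i 1, Vtx.w i 2) ∨ p = (Vtx.w i 2, Vtx.w i 3))) ∨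
        (∃ i, 1 ≤ i ∧ i ≤ m - 1 ∧ p = (Vtx.x i, Vtx.x (i + 1))) }

/-- The set `C = {g₀, g₁, …, g_{n-1}} ∪ {z₁, …, z_m}`. -/
def Cset (n m : ℕ) : Set Vtx :=
  { v | (∃ i, i ≤ n - 1 ∧ v = Vtx.g i) ∨ (∃ i, 1 ≤ i ∧ i ≤ m ∧ v = Vtx.z i) }

/-- The relation `R ⊆ V(G) × E(G)`: `(w_{i,j}, (bₗ, eₗ)) ∈ R` iff `l_{i,j} = xₗ`, and
`(w_{i,j}, (cₗ, fₗ)) ∈ R` iff `l_{i,j} = ¬xₗ`. -/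
def Rrel (lit : ℕ → ℕ → Lit) (m : ℕ) : Set (Vtx × Edge) :=
  { p | ∃ i j, 1 ≤ i ∧ i ≤ m ∧ 1 ≤ j ∧ j ≤ 3 ∧
        ((∃ l, lit i j = Lit.pos l ∧ p = (Vtx.w i j, (Vtx.b l, Vtx.e l))) ∨
         (∃ l, lit i j = Lit.neg l ∧ p = (Vtx.w i j, (Vtx.c l, Vtx.f l)))) }

/-- `Rinv R E = R⁻¹(E)`: the vertices pointing some edge of `E`. -/
def Rinv (R : Set (Vtx × Edge)) (E : Set Edge) : Set Vtx :=
  { v | ∃ e ∈ E, (v, e) ∈ R }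

/-- The set of (directed) edges traversed by a path given as its list of vertices. -/
def pathEdges (p : List Vtx) : Set Edge := { e | e ∈ p.zip p.tail }

/-- A legal move of the graph game from active vertex `u ∈ C` with current edge set `E`
along the directed path `p` (a list of at least two pairwise distinct vertices whose
consecutive pairs are edges of `E`), ending at a vertex `v ∈ C ∪ R⁻¹(E)`, with all
internal vertices of `p` outside `C ∪ R⁻¹(E)`; the resulting edge set `E'` is obtained
by deleting the edges of `p` from `E`. -/
def LegalMoveVia (C : Set Vtx) (R : Set (Vtx × Edge))
    (u : Vtx) (E : Set Edge) (v : Vtx) (E' : Set Edge) (p : List Vtx) : Prop :=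
  u ∈ C ∧ v ∈ C ∪ Rinv R E ∧
  2 ≤ p.length ∧ p.Nodup ∧
  p.head? = some u ∧ p.getLast? = some v ∧
  List.Chain' (fun a b => (a, b) ∈ E) p ∧
  (∀ w ∈ (p.drop 1).dropLast, w ∉ C ∪ Rinv R E) ∧
  E' = E \ pathEdges p

/-- A legal move from `(u, E)` to `(v, E')` (along some path). -/
def LegalMove (C : Set Vtx) (R : Set (Vtx × Edge))
    (u : Vtx) (E : Set Edge) (v : Vtx) (E' : Set Edge) : Prop :=
  ∃ p, LegalMoveVia C R u E v E' p

/-- `MoverWins C R true u E` says that the player to move at the position with active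
vertex `u` and current edge set `E` has a winning strategy; `MoverWins C R false u E`
says that the player to move loses whatever he does (in particular, if he has no legal
move he loses immediately; a move to a vertex of `R⁻¹(E)` wins the game for the mover). -/
inductive MoverWins (C : Set Vtx) (R : Set (Vtx × Edge)) : Bool → Vtx → Set Edge → Prop
  | winsNow {u E v E'} : LegalMove C R u E v E' → v ∈ Rinv R E →
      MoverWins C R true u E
  | winsLater {u E v E'} : LegalMove C R u E v E' → MoverWins C R false v E' →
      MoverWins C R true u E
  | loses {u E} :
      (∀ v E', LegalMove C R u E v E' → v ∉ Rinv R E) →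
      (∀ v E', LegalMove C R u E v E' → MoverWins C R true v E') →
      MoverWins C R false u E

/-- The two players of the graph game. -/
inductive Player where
  | ex | fa
deriving DecidableEq

/-- The opponent of a player. -/
def Player.other : Player → Player
  | .ex => .fa
  | .fa => .ex

/-- A (maximal) play of the graph game on `(G, C, s, R)` starting from active vertex `s`
and edge set `E0`, with the ∃-player moving first.  `act k` and `edg k` are the active
vertex and edge set after `k` moves, `turn k` is the player who makes the `(k+1)`-st
move, and `len` is the total number of moves.  The play stops either because its last
move reached a vertex of `R⁻¹(E)` (the mover wins) or because the player to move has no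
legal move (he loses); before that, no move may end in `R⁻¹(E)` without stopping. -/
structure Play (C : Set Vtx) (R : Set (Vtx × Edge)) (s : Vtx) (E0 : Set Edge) where
  len : ℕ
  act : ℕ → Vtx
  edg : ℕ → Set Edge
  turn : ℕ → Player
  init_act : act 0 = s
  init_edg : edg 0 = E0
  init_turn : turn 0 = Player.ex
  turn_alt : ∀ k, turn (k + 1) = (turn k).other
  step : ∀ k, k < len → LegalMove C R (act k) (edg k) (act (k + 1)) (edg (k + 1))
  not_over : ∀ k, k + 1 < len → act (k + 1) ∉ Rinv R (edg k)
  maximal : (0 < len ∧ act len ∈ Rinv R (edg (len - 1))) ∨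
            (∀ v E', ¬ LegalMove C R (act len) (edg len) v E')

/-- The path through variable gadget `l` (from `g (l-1)` to `g l`), taking the
`c`-side when `b = true` (meaning `x_l := true`) and the `b`-side otherwise. -/
def gpath (l : ℕ) (b : Bool) : List Vtx :=
  [Vtx.g (l-1), Vtx.a l, if b then Vtx.c l else Vtx.b l,
   if b then Vtx.f l else Vtx.e l, Vtx.d l, Vtx.g l]

/-- `xpath d i = [x i, x (i+1), …, x (i+d), y (i+d), z (i+d)]`. -/
def xpath : ℕ → ℕ → List Vtx
  | 0, i => [Vtx.x i, Vtx.y i, Vtx.z i]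
  | d+1, i => Vtx.x i :: xpath d (i+1)

/-- Edges deleted after the first `k` variable moves with choices `σ`. -/
def Del (σ : ℕ → Bool) (k : ℕ) : Set Edge :=
  { e | ∃ l, 1 ≤ l ∧ l ≤ k ∧ e ∈ pathEdges (gpath l (σ l)) }

section
variable {n m : ℕ} {lit : ℕ → ℕ → Lit}

lemma mem_rinv_shape {E v} (h : v ∈ Rinv (Rrel lit m) E) : ∃ i j, v = Vtx.w i j := by
  obtain ⟨e, _, hR⟩ := h
  obtain ⟨i, j, _, _, _, _, h | h⟩ := hR <;> obtain ⟨l, _, hp⟩ := h <;>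
    exact ⟨i, j, (Prod.ext_iff.1 hp).1⟩

lemma mem_CR_shape {E v} (h : v ∈ Cset n m ∪ Rinv (Rrel lit m) E) :
    (∃ i, i ≤ n - 1 ∧ v = Vtx.g i) ∨ (∃ i, 1 ≤ i ∧ i ≤ m ∧ v = Vtx.z i) ∨
    (∃ i j, v = Vtx.w i j) := by
  rcases h with h | h
  · rcases h with h | h
    · exact Or.inl h
    · exact Or.inr (Or.inl h)
  · exact Or.inr (Or.inr (mem_rinv_shape h))

lemma succ_g {k v} (hk : k < n) (h : (Vtx.g k, v) ∈ EG n m) : v = Vtx.a (k+1) := by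
  simp only [EG, Set.mem_setOf_eq, Prod.mk.injEq] at h
  rcases h with ⟨i,_,_,h⟩ | ⟨i,hi,h⟩ | h | ⟨i,_,_,h⟩ | ⟨i,_,_,h⟩ <;>
    simp_all <;> omega


end
section
variable {n m : ℕ} {lit : ℕ → ℕ → Lit}

lemma succ_a {l v} (h : (Vtx.a l, v) ∈ EG n m) : v = Vtx.b l ∨ v = Vtx.c l := by
  simp only [EG, Set.mem_setOf_eq, Prod.mk.injEq] at h; aesop

lemma succ_b {l v} (h : (Vtx.b l, v) ∈ EG n m) : v = Vtx.e l := by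
  simp only [EG, Set.mem_setOf_eq, Prod.mk.injEq] at h; aesop

lemma succ_c {l v} (h : (Vtx.c l, v) ∈ EG n m) : v = Vtx.f l := by
  simp only [EG, Set.mem_setOf_eq, Prod.mk.injEq] at h; aesop

lemma succ_e {l v} (h : (Vtx.e l, v) ∈ EG n m) : v = Vtx.d l := by
  simp only [EG, Set.mem_setOf_eq, Prod.mk.injEq] at h; aesop

lemma succ_f {l v} (h : (Vtx.f l, v) ∈ EG n m) : v = Vtx.d l := by
  simp only [EG, Set.mem_setOf_eq, Prod.mk.injEq] at h; aesop

lemma succ_d {l v} (h : (Vtx.d l, v) ∈ EG n m) : v = Vtx.g l := by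
  simp only [EG, Set.mem_setOf_eq, Prod.mk.injEq] at h; aesop

lemma succ_gn {v} (hn : 1 ≤ n) (h : (Vtx.g n, v) ∈ EG n m) : v = Vtx.x 1 := by
  simp only [EG, Set.mem_setOf_eq, Prod.mk.injEq] at h
  rcases h with ⟨i,_,_,h⟩ | ⟨i,hi,h⟩ | h | ⟨i,_,_,h⟩ | ⟨i,_,_,h⟩ <;> simp_all <;> omega

lemma succ_x {i v} (h : (Vtx.x i, v) ∈ EG n m) :
    v = Vtx.y i ∨ (v = Vtx.x (i+1) ∧ i + 1 ≤ m) := by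
  simp only [EG, Set.mem_setOf_eq, Prod.mk.injEq] at h
  rcases h with ⟨l,_,_,h⟩ | ⟨l,hl,h⟩ | h | ⟨l,_,_,h⟩ | ⟨l,h1,h2,h3⟩
  · simp_all
  · simp_all
  · simp_all
  · aesop
  · obtain ⟨hx, rfl⟩ := h3
    injection hx with hx'; subst hx'
    exact Or.inr ⟨rfl, by omega⟩

lemma succ_y {i v} (h : (Vtx.y i, v) ∈ EG n m) : v = Vtx.z i := by
  simp only [EG, Set.mem_setOf_eq, Prod.mk.injEq] at h; aesop

lemma succ_z {i v} (h : (Vtx.z i, v) ∈ EG n m) : v = Vtx.w i 1 := by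
  simp only [EG, Set.mem_setOf_eq, Prod.mk.injEq] at h; aesop

lemma succ_w {i j v} (h : (Vtx.w i j, v) ∈ EG n m) :
    (j = 1 ∧ v = Vtx.w i 2) ∨ (j = 2 ∧ v = Vtx.w i 3) := by
  simp only [EG, Set.mem_setOf_eq, Prod.mk.injEq] at h; aesop

end
/-- Invariant for a suffix of a legal-move path: it is a chain in `E`, ends at `v`,
and all its vertices except the last avoid `S`. -/
def GT (S : Set Vtx) (E : Set Edge) (v : Vtx) (q : List Vtx) : Prop :=
  List.Chain' (fun a b => (a, b) ∈ E) q ∧ q.getLast? = some v ∧ ∀ w ∈ q.dropLast, w ∉ S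

section
variable {S : Set Vtx} {E : Set Edge} {v : Vtx}

lemma gt_stop {u0 : Vtx} {q' : List Vtx} (hGT : GT S E v (u0 :: q')) (hu0 : u0 ∈ S) :
    q' = [] ∧ v = u0 := by
  obtain ⟨hch, hlast, hint⟩ := hGT
  cases q' with
  | nil => simp_all
  | cons u1 q'' =>
    exfalso; exact hint u0 (by simp [List.dropLast_cons₂]) hu0

lemma gt_step {u0 : Vtx} {q' : List Vtx} (hGT : GT S E v (u0 :: q')) (hvS : v ∈ S)
    (hu0 : u0 ∉ S) :
    ∃ u1 q'', q' = u1 :: q'' ∧ (u0, u1) ∈ E ∧ GT S E v q' := by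
  obtain ⟨hch, hlast, hint⟩ := hGT
  cases q' with
  | nil =>
    exfalso; apply hu0; simp at hlast; exact hlast ▸ hvS
  | cons u1 q'' =>
    refine ⟨u1, q'', rfl, (List.isChain_cons_cons.1 hch).1,
      (List.isChain_cons_cons.1 hch).2, by simpa using hlast, ?_⟩
    intro w hw; exact hint w (by simp [List.dropLast_cons₂, hw])

lemma legal_destruct {C : Set Vtx} {R : Set (Vtx × Edge)} {u : Vtx} {E' : Set Edge}
    {p : List Vtx} (h : LegalMoveVia C R u E v E' p) :
    ∃ u1 t, p = u :: u1 :: t ∧ (u, u1) ∈ E ∧ GT (C ∪ Rinv R E) E v (u1 :: t) ∧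
      E' = E \ pathEdges p ∧ v ∈ C ∪ Rinv R E ∧ u ∈ C := by
  obtain ⟨hu, hv, hlen, hnd, hhead, hlast, hch, hint, hE'⟩ := h
  cases p with
  | nil => simp at hhead
  | cons u0 t =>
    obtain rfl : u0 = u := by simpa using hhead
    cases t with
    | nil => simp at hlen
    | cons u1 t' =>
      refine ⟨u1, t', rfl, (List.isChain_cons_cons.1 hch).1,
        ⟨(List.isChain_cons_cons.1 hch).2, by simpa using hlast, by simpa using hint⟩,
        hE', hv, hu⟩

end
section
variable {n m : ℕ} {lit : ℕ → ℕ → Lit} {E : Set Edge}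

lemma notS_a {l} : Vtx.a l ∉ Cset n m ∪ Rinv (Rrel lit m) E := fun h => by
  rcases mem_CR_shape h with ⟨i,_,h'⟩|⟨i,_,_,h'⟩|⟨i,j,h'⟩ <;> simp at h'
lemma notS_b {l} : Vtx.b l ∉ Cset n m ∪ Rinv (Rrel lit m) E := fun h => by
  rcases mem_CR_shape h with ⟨i,_,h'⟩|⟨i,_,_,h'⟩|⟨i,j,h'⟩ <;> simp at h'
lemma notS_c {l} : Vtx.c l ∉ Cset n m ∪ Rinv (Rrel lit m) E := fun h => by
  rcases mem_CR_shape h with ⟨i,_,h'⟩|⟨i,_,_,h'⟩|⟨i,j,h'⟩ <;> simp at h'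
lemma notS_e {l} : Vtx.e l ∉ Cset n m ∪ Rinv (Rrel lit m) E := fun h => by
  rcases mem_CR_shape h with ⟨i,_,h'⟩|⟨i,_,_,h'⟩|⟨i,j,h'⟩ <;> simp at h'
lemma notS_f {l} : Vtx.f l ∉ Cset n m ∪ Rinv (Rrel lit m) E := fun h => by
  rcases mem_CR_shape h with ⟨i,_,h'⟩|⟨i,_,_,h'⟩|⟨i,j,h'⟩ <;> simp at h'
lemma notS_d {l} : Vtx.d l ∉ Cset n m ∪ Rinv (Rrel lit m) E := fun h => by
  rcases mem_CR_shape h with ⟨i,_,h'⟩|⟨i,_,_,h'⟩|⟨i,j,h'⟩ <;> simp at h'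
lemma notS_x {l} : Vtx.x l ∉ Cset n m ∪ Rinv (Rrel lit m) E := fun h => by
  rcases mem_CR_shape h with ⟨i,_,h'⟩|⟨i,_,_,h'⟩|⟨i,j,h'⟩ <;> simp at h'
lemma notS_y {l} : Vtx.y l ∉ Cset n m ∪ Rinv (Rrel lit m) E := fun h => by
  rcases mem_CR_shape h with ⟨i,_,h'⟩|⟨i,_,_,h'⟩|⟨i,j,h'⟩ <;> simp at h'
lemma notS_g {k} (hk : n - 1 < k) : Vtx.g k ∉ Cset n m ∪ Rinv (Rrel lit m) E := fun h => by
  rcases mem_CR_shape h with ⟨i,hi,h'⟩|⟨i,_,_,h'⟩|⟨i,j,h'⟩ <;> simp at h' <;> omega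

lemma g_mem_C {k} (hk : k ≤ n - 1) : Vtx.g k ∈ Cset n m := Or.inl ⟨k, hk, rfl⟩
lemma z_mem_C {i} (h1 : 1 ≤ i) (h2 : i ≤ m) : Vtx.z i ∈ Cset n m := Or.inr ⟨i, h1, h2, rfl⟩

lemma v_shape_of_S {v : Vtx} (h : v ∈ Cset n m ∪ Rinv (Rrel lit m) E) :
    (∃ i, v = Vtx.g i) ∨ (∃ i, v = Vtx.z i) ∨ (∃ i j, v = Vtx.w i j) := by
  rcases mem_CR_shape h with ⟨i,_,h'⟩|⟨i,_,_,h'⟩|⟨i,j,h'⟩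
  exacts [Or.inl ⟨i, h'⟩, Or.inr (Or.inl ⟨i, h'⟩), Or.inr (Or.inr ⟨i, j, h'⟩)]

end
/-- The full path of the final variable move: through gadget `n`, then along
`x 1, …, x (1+d)` to `z (1+d)`. -/
def fpath (n : ℕ) (bb : Bool) (d : ℕ) : List Vtx :=
  Vtx.g (n-1) :: Vtx.a n :: (if bb then Vtx.c n else Vtx.b n) ::
  (if bb then Vtx.f n else Vtx.e n) :: Vtx.d n :: Vtx.g n :: xpath d 1

section
variable {n m : ℕ} {lit : ℕ → ℕ → Lit} {E : Set Edge} {v : Vtx}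

lemma xpath_head (d i : ℕ) : (xpath d i).head? = some (Vtx.x i) := by
  cases d <;> rfl

lemma char_xtail (hE : E ⊆ EG n m) (hv : v ∈ Cset n m ∪ Rinv (Rrel lit m) E) :
    ∀ q i, 1 ≤ i → i ≤ m → GT (Cset n m ∪ Rinv (Rrel lit m) E) E v q →
      q.head? = some (Vtx.x i) →
      ∃ d, i + d ≤ m ∧ q = xpath d i ∧ v = Vtx.z (i + d) := by
  intro q
  induction q with
  | nil => intro i _ _ _ hh; simp at hh
  | cons u0 q' ih =>
    intro i hi1 hi2 hGT hh
    obtain rfl : u0 = Vtx.x i := by simpa using hh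
    obtain ⟨u1, q'', rfl, he1, hGT'⟩ := gt_step hGT hv notS_x
    rcases succ_x (hE he1) with rfl | ⟨rfl, him⟩
    · obtain ⟨u2, q''', rfl, he2, hGT''⟩ := gt_step hGT' hv notS_y
      obtain rfl := succ_y (hE he2)
      obtain ⟨rfl, rfl⟩ := gt_stop hGT'' (Or.inl (z_mem_C hi1 hi2))
      exact ⟨0, by omega, rfl, rfl⟩
    · obtain ⟨d, hd, hq, hv'⟩ := ih (i+1) (by omega) him hGT' rfl
      exact ⟨d + 1, by omega, by simp [xpath, hq], by rw [hv']; congr 1; omega⟩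

lemma gad_walk (hE : E ⊆ EG n m) (hv : v ∈ Cset n m ∪ Rinv (Rrel lit m) E)
    {l : ℕ} {q : List Vtx} (hGT : GT (Cset n m ∪ Rinv (Rrel lit m) E) E v q)
    (hh : q.head? = some (Vtx.a l)) :
    ∃ (bb : Bool) (q' : List Vtx),
      q = Vtx.a l :: (if bb then Vtx.c l else Vtx.b l) ::
          (if bb then Vtx.f l else Vtx.e l) :: Vtx.d l :: q' ∧
      GT (Cset n m ∪ Rinv (Rrel lit m) E) E v q' ∧
      q'.head? = some (Vtx.g l) := by
  cases q with
  | nil => simp at hh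
  | cons u0 q0 =>
    obtain rfl : u0 = Vtx.a l := by simpa using hh
    obtain ⟨u1, q1, rfl, he1, hGT1⟩ := gt_step hGT hv notS_a
    rcases succ_a (hE he1) with rfl | rfl
    · obtain ⟨u2, q2, rfl, he2, hGT2⟩ := gt_step hGT1 hv notS_b
      obtain rfl := succ_b (hE he2)
      obtain ⟨u3, q3, rfl, he3, hGT3⟩ := gt_step hGT2 hv notS_e
      obtain rfl := succ_e (hE he3)
      obtain ⟨u4, q4, rfl, he4, hGT4⟩ := gt_step hGT3 hv notS_d
      obtain rfl := succ_d (hE he4)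
      exact ⟨false, Vtx.g l :: q4, by simp, hGT4, rfl⟩
    · obtain ⟨u2, q2, rfl, he2, hGT2⟩ := gt_step hGT1 hv notS_c
      obtain rfl := succ_c (hE he2)
      obtain ⟨u3, q3, rfl, he3, hGT3⟩ := gt_step hGT2 hv notS_f
      obtain rfl := succ_f (hE he3)
      obtain ⟨u4, q4, rfl, he4, hGT4⟩ := gt_step hGT3 hv notS_d
      obtain rfl := succ_d (hE he4)
      exact ⟨true, Vtx.g l :: q4, by simp, hGT4, rfl⟩

/-- Characterization of legal moves from `g k` for `k + 2 ≤ n`. -/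
lemma char_gmid {E' : Set Edge} {p : List Vtx} {k : ℕ} (hE : E ⊆ EG n m)
    (hk : k + 2 ≤ n)
    (h : LegalMoveVia (Cset n m) (Rrel lit m) (Vtx.g k) E v E' p) :
    ∃ bb : Bool, p = gpath (k+1) bb ∧ v = Vtx.g (k+1) ∧
      E' = E \ pathEdges (gpath (k+1) bb) := by
  obtain ⟨u1, t, rfl, he0, hGT, hE', hv, -⟩ := legal_destruct h
  obtain rfl := succ_g (by omega) (hE he0)
  obtain ⟨bb, q', hq, hGT', hh'⟩ := gad_walk hE hv hGT rfl
  cases q' with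
  | nil => simp at hh'
  | cons u5 q5 =>
    obtain rfl : u5 = Vtx.g (k+1) := by simpa using hh'
    obtain ⟨rfl, rfl⟩ := gt_stop hGT' (Or.inl (g_mem_C (by omega)))
    refine ⟨bb, ?_, rfl, ?_⟩
    · rw [hq]; simp [gpath]
    · rw [hE', hq]; simp [gpath]

/-- Characterization of legal moves from `g (n-1)`. -/
lemma char_glast {E' : Set Edge} {p : List Vtx} (hE : E ⊆ EG n m) (hn2 : 2 ≤ n)
    (hm1 : 1 ≤ m)
    (h : LegalMoveVia (Cset n m) (Rrel lit m) (Vtx.g (n-1)) E v E' p) :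
    ∃ (bb : Bool) (d : ℕ), 1 + d ≤ m ∧ p = fpath n bb d ∧
      v = Vtx.z (1 + d) ∧ E' = E \ pathEdges (fpath n bb d) := by
  obtain ⟨u1, t, rfl, he0, hGT, hE', hv, -⟩ := legal_destruct h
  obtain rfl : u1 = Vtx.a n := by
    have := succ_g (n := n) (by omega) (hE he0)
    rw [this]; congr 1; omega
  obtain ⟨bb, q', hq, hGT', hh'⟩ := gad_walk hE hv hGT rfl
  cases q' with
  | nil => simp at hh'
  | cons u5 q5 =>
    obtain rfl : u5 = Vtx.g n := by simpa using hh'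
    obtain ⟨u6, q6, rfl, he6, hGT6⟩ := gt_step hGT' hv (notS_g (by omega))
    obtain rfl := succ_gn (by omega) (hE he6)
    obtain ⟨d, hd, hq6, rfl⟩ := char_xtail hE hv _ 1 le_rfl hm1 hGT6 rfl
    have hp : Vtx.g (n-1) :: Vtx.a n :: t = fpath n bb d := by
      simp only [fpath]; rw [hq, hq6]
    exact ⟨bb, d, hd, hp, rfl, by rw [hE', hp]⟩

end
section
variable {n m : ℕ} {lit : ℕ → ℕ → Lit}

lemma mem_pe_gpath {e : Edge} {l : ℕ} {c : Bool} :
    e ∈ pathEdges (gpath l c) ↔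
      e = (Vtx.g (l-1), Vtx.a l) ∨
      e = (Vtx.a l, if c then Vtx.c l else Vtx.b l) ∨
      e = ((if c then Vtx.c l else Vtx.b l), (if c then Vtx.f l else Vtx.e l)) ∨
      e = ((if c then Vtx.f l else Vtx.e l), Vtx.d l) ∨
      e = (Vtx.d l, Vtx.g l) := by
  cases c <;> simp [pathEdges, gpath]

lemma xpath_cons (d i : ℕ) : ∃ r, xpath d i = Vtx.x i :: r := by
  cases d <;> exact ⟨_, rfl⟩

lemma mem_pe_xpath {e : Edge} : ∀ {d i : ℕ},
    e ∈ pathEdges (xpath d i) ↔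
      ((∃ j, i ≤ j ∧ j < i + d ∧ e = (Vtx.x j, Vtx.x (j+1))) ∨
       e = (Vtx.x (i+d), Vtx.y (i+d)) ∨ e = (Vtx.y (i+d), Vtx.z (i+d))) := by
  intro d
  induction d with
  | zero => intro i; simp [xpath, pathEdges]; intro j h1 h2; omega
  | succ d ih =>
    intro i
    obtain ⟨r, hr⟩ := xpath_cons d (i+1)
    have : xpath (d+1) i = Vtx.x i :: Vtx.x (i+1) :: r := by simp [xpath, hr]
    rw [this]
    have h2 : e ∈ pathEdges (Vtx.x i :: Vtx.x (i+1) :: r) ↔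
        e = (Vtx.x i, Vtx.x (i+1)) ∨ e ∈ pathEdges (Vtx.x (i+1) :: r) := by
      simp [pathEdges]
    rw [h2, ← hr, ih]
    constructor
    · rintro (rfl | ⟨j, h1, h2, rfl⟩ | h | h)
      · exact Or.inl ⟨i, le_rfl, by omega, rfl⟩
      · exact Or.inl ⟨j, by omega, by omega, rfl⟩
      · rw [h]; right; left; rw [show i+1+d = i+(d+1) by omega]
      · rw [h]; right; right; rw [show i+1+d = i+(d+1) by omega]
    · rintro (⟨j, h1, h2, rfl⟩ | h | h)
      · rcases Nat.eq_or_lt_of_le h1 with rfl | hlt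
        · exact Or.inl rfl
        · exact Or.inr (Or.inl ⟨j, by omega, by omega, rfl⟩)
      · rw [h]; right; right; left; rw [show i+(d+1) = i+1+d by omega]
      · rw [h]; right; right; right; rw [show i+(d+1) = i+1+d by omega]

lemma mem_pe_fpath {e : Edge} {bb : Bool} {d : ℕ} :
    e ∈ pathEdges (fpath n bb d) ↔
      e = (Vtx.g (n-1), Vtx.a n) ∨
      e = (Vtx.a n, if bb then Vtx.c n else Vtx.b n) ∨
      e = ((if bb then Vtx.c n else Vtx.b n), (if bb then Vtx.f n else Vtx.e n)) ∨
      e = ((if bb then Vtx.f n else Vtx.e n), Vtx.d n) ∨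
      e = (Vtx.d n, Vtx.g n) ∨ e = (Vtx.g n, Vtx.x 1) ∨
      e ∈ pathEdges (xpath d 1) := by
  obtain ⟨r, hr⟩ := xpath_cons d 1
  have : fpath n bb d = Vtx.g (n-1) :: Vtx.a n :: (if bb then Vtx.c n else Vtx.b n) ::
      (if bb then Vtx.f n else Vtx.e n) :: Vtx.d n :: Vtx.g n :: Vtx.x 1 :: r := by
    simp [fpath, hr]
  rw [this, ← hr]
  cases bb <;> simp [pathEdges, hr] <;> tauto

lemma del_zero {σ : ℕ → Bool} : Del σ 0 = ∅ := by
  ext e; simp [Del]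

lemma del_succ {σ : ℕ → Bool} {k : ℕ} {bb : Bool} :
    Del (Function.update σ (k+1) bb) (k+1) = Del σ k ∪ pathEdges (gpath (k+1) bb) := by
  ext e
  simp only [Del, Set.mem_setOf_eq, Set.mem_union]
  constructor
  · rintro ⟨l, h1, h2, hm⟩
    rcases Nat.eq_or_lt_of_le h2 with rfl | hlt
    · right; rwa [Function.update_self] at hm
    · left; exact ⟨l, h1, by omega, by rwa [Function.update_of_ne (by omega)] at hm⟩
  · rintro (⟨l, h1, h2, hm⟩ | hm)
    · exact ⟨l, h1, by omega, by rwa [Function.update_of_ne (by omega)]⟩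
    · exact ⟨k+1, by omega, le_rfl, by rwa [Function.update_self]⟩

lemma del_shape {σ : ℕ → Bool} {k : ℕ} {e : Edge} (h : e ∈ Del σ k) :
    ∃ l, 1 ≤ l ∧ l ≤ k ∧
      (e.1 = Vtx.g (l-1) ∨ e.1 = Vtx.a l ∨ e.1 = Vtx.b l ∨ e.1 = Vtx.c l ∨
       e.1 = Vtx.e l ∨ e.1 = Vtx.f l ∨ e.1 = Vtx.d l) := by
  obtain ⟨l, h1, h2, hm⟩ := h
  refine ⟨l, h1, h2, ?_⟩
  rcases mem_pe_gpath.1 hm with h | h | h | h | h <;> rw [h] <;> cases σ l <;> simp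

lemma be_mem_del {σ : ℕ → Bool} {k l : ℕ} :
    (Vtx.b l, Vtx.e l) ∈ Del σ k ↔ 1 ≤ l ∧ l ≤ k ∧ σ l = false := by
  constructor
  · rintro ⟨l', h1, h2, hm⟩
    cases hσ : σ l' <;> rw [hσ] at hm <;>
      rcases mem_pe_gpath.1 hm with h | h | h | h | h <;> simp_all
  · rintro ⟨h1, h2, h3⟩
    exact ⟨l, h1, h2, mem_pe_gpath.2 (by rw [h3]; simp)⟩

lemma cf_mem_del {σ : ℕ → Bool} {k l : ℕ} :
    (Vtx.c l, Vtx.f l) ∈ Del σ k ↔ 1 ≤ l ∧ l ≤ k ∧ σ l = true := by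
  constructor
  · rintro ⟨l', h1, h2, hm⟩
    cases hσ : σ l' <;> rw [hσ] at hm <;>
      rcases mem_pe_gpath.1 hm with h | h | h | h | h <;> simp_all
  · rintro ⟨h1, h2, h3⟩
    exact ⟨l, h1, h2, mem_pe_gpath.2 (by rw [h3]; simp)⟩

end
section
variable {n m : ℕ} {lit : ℕ → ℕ → Lit}

lemma EG_ga {k} (h : k ≤ n - 1) : ((Vtx.g k, Vtx.a (k+1)) : Edge) ∈ EG n m :=
  Or.inr (Or.inl ⟨k, h, rfl⟩)
lemma EG_ab {l} (h1 : 1 ≤ l) (h2 : l ≤ n) : ((Vtx.a l, Vtx.b l) : Edge) ∈ EG n m :=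
  Or.inl ⟨l, h1, h2, Or.inl rfl⟩
lemma EG_ac {l} (h1 : 1 ≤ l) (h2 : l ≤ n) : ((Vtx.a l, Vtx.c l) : Edge) ∈ EG n m :=
  Or.inl ⟨l, h1, h2, Or.inr (Or.inl rfl)⟩
lemma EG_be {l} (h1 : 1 ≤ l) (h2 : l ≤ n) : ((Vtx.b l, Vtx.e l) : Edge) ∈ EG n m :=
  Or.inl ⟨l, h1, h2, Or.inr (Or.inr (Or.inl rfl))⟩
lemma EG_cf {l} (h1 : 1 ≤ l) (h2 : l ≤ n) : ((Vtx.c l, Vtx.f l) : Edge) ∈ EG n m :=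
  Or.inl ⟨l, h1, h2, Or.inr (Or.inr (Or.inr (Or.inl rfl)))⟩
lemma EG_ed {l} (h1 : 1 ≤ l) (h2 : l ≤ n) : ((Vtx.e l, Vtx.d l) : Edge) ∈ EG n m :=
  Or.inl ⟨l, h1, h2, Or.inr (Or.inr (Or.inr (Or.inr (Or.inl rfl))))⟩
lemma EG_fd {l} (h1 : 1 ≤ l) (h2 : l ≤ n) : ((Vtx.f l, Vtx.d l) : Edge) ∈ EG n m :=
  Or.inl ⟨l, h1, h2, Or.inr (Or.inr (Or.inr (Or.inr (Or.inr (Or.inl rfl)))))⟩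
lemma EG_dg {l} (h1 : 1 ≤ l) (h2 : l ≤ n) : ((Vtx.d l, Vtx.g l) : Edge) ∈ EG n m :=
  Or.inl ⟨l, h1, h2, Or.inr (Or.inr (Or.inr (Or.inr (Or.inr (Or.inr rfl)))))⟩
lemma EG_zw {i} (h1 : 1 ≤ i) (h2 : i ≤ m) : ((Vtx.z i, Vtx.w i 1) : Edge) ∈ EG n m :=
  Or.inr (Or.inr (Or.inr (Or.inl ⟨i, h1, h2, Or.inr (Or.inr (Or.inl rfl))⟩)))
lemma EG_w12 {i} (h1 : 1 ≤ i) (h2 : i ≤ m) : ((Vtx.w i 1, Vtx.w i 2) : Edge) ∈ EG n m :=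
  Or.inr (Or.inr (Or.inr (Or.inl ⟨i, h1, h2, Or.inr (Or.inr (Or.inr (Or.inl rfl)))⟩)))
lemma EG_w23 {i} (h1 : 1 ≤ i) (h2 : i ≤ m) : ((Vtx.w i 2, Vtx.w i 3) : Edge) ∈ EG n m :=
  Or.inr (Or.inr (Or.inr (Or.inl ⟨i, h1, h2, Or.inr (Or.inr (Or.inr (Or.inr rfl)))⟩)))

lemma not_del_g {σ : ℕ → Bool} {k j : ℕ} {u : Vtx} (hj : k ≤ j) :
    ((Vtx.g j, u) : Edge) ∉ Del σ k := fun h => by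
  obtain ⟨l, h1, h2, hs⟩ := del_shape h
  rcases hs with h'|h'|h'|h'|h'|h'|h' <;> simp at h' <;> omega
lemma not_del_a {σ : ℕ → Bool} {k l' : ℕ} {u : Vtx} (hl : k < l') :
    ((Vtx.a l', u) : Edge) ∉ Del σ k := fun h => by
  obtain ⟨l, h1, h2, hs⟩ := del_shape h
  rcases hs with h'|h'|h'|h'|h'|h'|h' <;> simp at h' <;> omega
lemma not_del_b {σ : ℕ → Bool} {k l' : ℕ} {u : Vtx} (hl : k < l') :
    ((Vtx.b l', u) : Edge) ∉ Del σ k := fun h => by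
  obtain ⟨l, h1, h2, hs⟩ := del_shape h
  rcases hs with h'|h'|h'|h'|h'|h'|h' <;> simp at h' <;> omega
lemma not_del_c {σ : ℕ → Bool} {k l' : ℕ} {u : Vtx} (hl : k < l') :
    ((Vtx.c l', u) : Edge) ∉ Del σ k := fun h => by
  obtain ⟨l, h1, h2, hs⟩ := del_shape h
  rcases hs with h'|h'|h'|h'|h'|h'|h' <;> simp at h' <;> omega
lemma not_del_e {σ : ℕ → Bool} {k l' : ℕ} {u : Vtx} (hl : k < l') :
    ((Vtx.e l', u) : Edge) ∉ Del σ k := fun h => by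
  obtain ⟨l, h1, h2, hs⟩ := del_shape h
  rcases hs with h'|h'|h'|h'|h'|h'|h' <;> simp at h' <;> omega
lemma not_del_f {σ : ℕ → Bool} {k l' : ℕ} {u : Vtx} (hl : k < l') :
    ((Vtx.f l', u) : Edge) ∉ Del σ k := fun h => by
  obtain ⟨l, h1, h2, hs⟩ := del_shape h
  rcases hs with h'|h'|h'|h'|h'|h'|h' <;> simp at h' <;> omega
lemma not_del_d {σ : ℕ → Bool} {k l' : ℕ} {u : Vtx} (hl : k < l') :
    ((Vtx.d l', u) : Edge) ∉ Del σ k := fun h => by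
  obtain ⟨l, h1, h2, hs⟩ := del_shape h
  rcases hs with h'|h'|h'|h'|h'|h'|h' <;> simp at h' <;> omega
lemma not_del_z {σ : ℕ → Bool} {k i : ℕ} {u : Vtx} :
    ((Vtx.z i, u) : Edge) ∉ Del σ k := fun h => by
  obtain ⟨l, h1, h2, hs⟩ := del_shape h
  rcases hs with h'|h'|h'|h'|h'|h'|h' <;> simp at h'
lemma not_del_w {σ : ℕ → Bool} {k i j : ℕ} {u : Vtx} :
    ((Vtx.w i j, u) : Edge) ∉ Del σ k := fun h => by
  obtain ⟨l, h1, h2, hs⟩ := del_shape h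
  rcases hs with h'|h'|h'|h'|h'|h'|h' <;> simp at h'

lemma legal_gmove {σ : ℕ → Bool} (k : ℕ) (bb : Bool) (hk : k + 2 ≤ n) :
    LegalMoveVia (Cset n m) (Rrel lit m) (Vtx.g k) (EG n m \ Del σ k) (Vtx.g (k+1))
      ((EG n m \ Del σ k) \ pathEdges (gpath (k+1) bb)) (gpath (k+1) bb) := by
  refine ⟨g_mem_C (by omega), Or.inl (g_mem_C (by omega)), ?_, ?_, ?_, ?_, ?_, ?_, rfl⟩
  · cases bb <;> simp [gpath]
  · cases bb <;> simp [gpath] <;> omega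
  · cases bb <;> simp [gpath]
  · cases bb <;> simp [gpath]
  · have h1 : ((Vtx.g k, Vtx.a (k+1)) : Edge) ∈ EG n m \ Del σ k :=
      ⟨EG_ga (by omega), not_del_g le_rfl⟩
    have h2 : ((Vtx.a (k+1), Vtx.b (k+1)) : Edge) ∈ EG n m \ Del σ k :=
      ⟨EG_ab (by omega) (by omega), not_del_a (by omega)⟩
    have h2' : ((Vtx.a (k+1), Vtx.c (k+1)) : Edge) ∈ EG n m \ Del σ k :=
      ⟨EG_ac (by omega) (by omega), not_del_a (by omega)⟩
    have h3 : ((Vtx.b (k+1), Vtx.e (k+1)) : Edge) ∈ EG n m \ Del σ k :=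
      ⟨EG_be (by omega) (by omega), not_del_b (by omega)⟩
    have h3' : ((Vtx.c (k+1), Vtx.f (k+1)) : Edge) ∈ EG n m \ Del σ k :=
      ⟨EG_cf (by omega) (by omega), not_del_c (by omega)⟩
    have h4 : ((Vtx.e (k+1), Vtx.d (k+1)) : Edge) ∈ EG n m \ Del σ k :=
      ⟨EG_ed (by omega) (by omega), not_del_e (by omega)⟩
    have h4' : ((Vtx.f (k+1), Vtx.d (k+1)) : Edge) ∈ EG n m \ Del σ k :=
      ⟨EG_fd (by omega) (by omega), not_del_f (by omega)⟩
    have h5 : ((Vtx.d (k+1), Vtx.g (k+1)) : Edge) ∈ EG n m \ Del σ k :=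
      ⟨EG_dg (by omega) (by omega), not_del_d (by omega)⟩
    cases bb
    · exact List.IsChain.cons_cons h1 (.cons_cons h2 (.cons_cons h3 (.cons_cons h4
        (.cons_cons h5 (List.isChain_singleton _)))))
    · exact List.IsChain.cons_cons h1 (.cons_cons h2' (.cons_cons h3' (.cons_cons h4'
        (.cons_cons h5 (List.isChain_singleton _)))))
  · intro w hw
    cases bb <;> simp [gpath] at hw <;> rcases hw with rfl|rfl|rfl|rfl
    exacts [notS_a, notS_b, notS_e, notS_d, notS_a, notS_c, notS_f, notS_d]

end
section
variable {n m : ℕ} {lit : ℕ → ℕ → Lit}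

lemma be_mem_fpath {bb : Bool} {d l : ℕ} :
    ((Vtx.b l, Vtx.e l) : Edge) ∈ pathEdges (fpath n bb d) ↔ (bb = false ∧ l = n) := by
  cases bb <;> rw [mem_pe_fpath] <;> simp [mem_pe_xpath] <;> tauto

lemma cf_mem_fpath {bb : Bool} {d l : ℕ} :
    ((Vtx.c l, Vtx.f l) : Edge) ∈ pathEdges (fpath n bb d) ↔ (bb = true ∧ l = n) := by
  cases bb <;> rw [mem_pe_fpath] <;> simp [mem_pe_xpath] <;> tauto

lemma not_fpath_z {bb : Bool} {d i : ℕ} {u : Vtx} :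
    ((Vtx.z i, u) : Edge) ∉ pathEdges (fpath n bb d) := by
  intro h
  rcases mem_pe_fpath.1 h with h'|h'|h'|h'|h'|h'|h' <;>
    [skip; cases bb; cases bb; cases bb; skip; skip; skip] <;>
    first
      | simp at h'
      | (rcases mem_pe_xpath.1 h' with ⟨j, _, _, h''⟩|h''|h'' <;> simp at h'')

lemma not_fpath_w {bb : Bool} {d i j : ℕ} {u : Vtx} :
    ((Vtx.w i j, u) : Edge) ∉ pathEdges (fpath n bb d) := by
  intro h
  rcases mem_pe_fpath.1 h with h'|h'|h'|h'|h'|h'|h' <;>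
    [skip; cases bb; cases bb; cases bb; skip; skip; skip] <;>
    first
      | simp at h'
      | (rcases mem_pe_xpath.1 h' with ⟨j', _, _, h''⟩|h''|h'' <;> simp at h'')

lemma alive_be {σ : ℕ → Bool} {bb : Bool} {d l : ℕ} (hn2 : 2 ≤ n) (h1 : 1 ≤ l)
    (h2 : l ≤ n) :
    ((Vtx.b l, Vtx.e l) : Edge) ∈ (EG n m \ Del σ (n-1)) \ pathEdges (fpath n bb d) ↔
      Function.update σ n bb l = true := by
  rw [Set.mem_diff, Set.mem_diff, be_mem_del, be_mem_fpath]
  rcases eq_or_ne l n with rfl | hne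
  · rw [Function.update_self]
    constructor
    · rintro ⟨⟨-, -⟩, hfp⟩
      cases bb
      · exact absurd ⟨rfl, rfl⟩ hfp
      · rfl
    · rintro rfl
      exact ⟨⟨EG_be h1 h2, fun h => absurd h.2.1 (by omega)⟩, fun h => by simp at h⟩
  · rw [Function.update_of_ne hne]
    constructor
    · rintro ⟨⟨-, hdel⟩, -⟩
      by_contra hb
      exact hdel ⟨h1, by omega, by simpa using hb⟩
    · intro hb
      refine ⟨⟨EG_be h1 h2, fun h => ?_⟩, fun h => absurd h.2 hne⟩
      rw [h.2.2] at hb; cases hb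
  
lemma alive_cf {σ : ℕ → Bool} {bb : Bool} {d l : ℕ} (hn2 : 2 ≤ n) (h1 : 1 ≤ l)
    (h2 : l ≤ n) :
    ((Vtx.c l, Vtx.f l) : Edge) ∈ (EG n m \ Del σ (n-1)) \ pathEdges (fpath n bb d) ↔
      Function.update σ n bb l = false := by
  rw [Set.mem_diff, Set.mem_diff, cf_mem_del, cf_mem_fpath]
  rcases eq_or_ne l n with rfl | hne
  · rw [Function.update_self]
    constructor
    · rintro ⟨⟨-, -⟩, hfp⟩
      cases bb
      · rfl
      · exact absurd ⟨rfl, rfl⟩ hfp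
    · rintro rfl
      exact ⟨⟨EG_cf h1 h2, fun h => absurd h.2.1 (by omega)⟩, fun h => by simp at h⟩
  · rw [Function.update_of_ne hne]
    constructor
    · rintro ⟨⟨-, hdel⟩, -⟩
      by_contra hb
      exact hdel ⟨h1, by omega, by simpa using hb⟩
    · intro hb
      refine ⟨⟨EG_cf h1 h2, fun h => ?_⟩, fun h => absurd h.2 hne⟩
      rw [h.2.2] at hb; cases hb

lemma w_rinv_iff {σ : ℕ → Bool} {bb : Bool} {d : ℕ} (hwf : LitWF n m lit) (hn2 : 2 ≤ n)
    {i j : ℕ} (hi1 : 1 ≤ i) (hi2 : i ≤ m) (hj1 : 1 ≤ j) (hj2 : j ≤ 3) :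
    Vtx.w i j ∈ Rinv (Rrel lit m) ((EG n m \ Del σ (n-1)) \ pathEdges (fpath n bb d)) ↔
      (lit i j).eval (Function.update σ n bb) = true := by
  have hvar := hwf i j hi1 hi2 hj1 hj2
  constructor
  · rintro ⟨e, he, hR⟩
    obtain ⟨i', j', -, -, -, -, hcase⟩ := hR
    rcases hcase with ⟨l, hl, hp⟩ | ⟨l, hl, hp⟩
    · simp only [Prod.mk.injEq, Vtx.w.injEq] at hp
      obtain ⟨⟨rfl, rfl⟩, rfl⟩ := hp
      rw [hl] at hvar; simp only [Lit.var] at hvar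
      simp only [Lit.eval, hl]
      exact (alive_be hn2 hvar.1 hvar.2).1 he
    · simp only [Prod.mk.injEq, Vtx.w.injEq] at hp
      obtain ⟨⟨rfl, rfl⟩, rfl⟩ := hp
      rw [hl] at hvar; simp only [Lit.var] at hvar
      simp only [Lit.eval, hl]
      simp [(alive_cf hn2 hvar.1 hvar.2).1 he]
  · intro heval
    cases hcl : lit i j with
    | pos l =>
      rw [hcl] at hvar; simp only [Lit.var] at hvar
      refine ⟨(Vtx.b l, Vtx.e l), ?_, ⟨i, j, hi1, hi2, hj1, hj2, Or.inl ⟨l, hcl, rfl⟩⟩⟩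
      apply (alive_be hn2 hvar.1 hvar.2).2
      rw [hcl] at heval; simpa [Lit.eval] using heval
    | neg l =>
      rw [hcl] at hvar; simp only [Lit.var] at hvar
      refine ⟨(Vtx.c l, Vtx.f l), ?_, ⟨i, j, hi1, hi2, hj1, hj2, Or.inr ⟨l, hcl, rfl⟩⟩⟩
      apply (alive_cf hn2 hvar.1 hvar.2).2
      rw [hcl] at heval; simpa [Lit.eval] using heval

lemma w_not_C {i j : ℕ} : Vtx.w i j ∉ Cset n m := by
  rintro (⟨i', _, h⟩ | ⟨i', _, _, h⟩) <;> simp at h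

lemma final_move {σ : ℕ → Bool} {bb : Bool} {d : ℕ} (hwf : LitWF n m lit) (hn2 : 2 ≤ n)
    (hd : 1 + d ≤ m) (hF : FTrue lit m (Function.update σ n bb)) :
    MoverWins (Cset n m) (Rrel lit m) true (Vtx.z (1+d))
      ((EG n m \ Del σ (n-1)) \ pathEdges (fpath n bb d)) := by
  set i := 1 + d with hi
  have hi1 : 1 ≤ i := by omega
  set E2 := (EG n m \ Del σ (n-1)) \ pathEdges (fpath n bb d) with hE2
  have ezw : ((Vtx.z i, Vtx.w i 1) : Edge) ∈ E2 :=
    ⟨⟨EG_zw hi1 hd, not_del_z⟩, not_fpath_z⟩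
  have ew12 : ((Vtx.w i 1, Vtx.w i 2) : Edge) ∈ E2 :=
    ⟨⟨EG_w12 hi1 hd, not_del_w⟩, not_fpath_w⟩
  have ew23 : ((Vtx.w i 2, Vtx.w i 3) : Edge) ∈ E2 :=
    ⟨⟨EG_w23 hi1 hd, not_del_w⟩, not_fpath_w⟩
  have hnotS : ∀ j, 1 ≤ j → j ≤ 3 → (lit i j).eval (Function.update σ n bb) ≠ true →
      Vtx.w i j ∉ Cset n m ∪ Rinv (Rrel lit m) E2 := by
    intro j hj1 hj2 hev
    rintro (hC | hRi)
    · exact w_not_C hC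
    · exact hev ((w_rinv_iff hwf hn2 hi1 hd hj1 hj2).1 hRi)
  obtain ⟨j, hj1, hj2, hje⟩ := hF i hi1 hd
  by_cases h1 : (lit i 1).eval (Function.update σ n bb) = true
  · have hwin : Vtx.w i 1 ∈ Rinv (Rrel lit m) E2 :=
      (w_rinv_iff hwf hn2 hi1 hd le_rfl (by omega)).2 h1
    refine MoverWins.winsNow (E' := E2 \ pathEdges [Vtx.z i, Vtx.w i 1])
      ⟨[Vtx.z i, Vtx.w i 1], z_mem_C hi1 hd, Or.inr hwin, by simp, by simp, rfl, rfl,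
        List.IsChain.cons_cons ezw (List.isChain_singleton _), by simp, rfl⟩ hwin
  · by_cases h2 : (lit i 2).eval (Function.update σ n bb) = true
    · have hwin : Vtx.w i 2 ∈ Rinv (Rrel lit m) E2 :=
        (w_rinv_iff hwf hn2 hi1 hd (by omega) (by omega)).2 h2
      refine MoverWins.winsNow (E' := E2 \ pathEdges [Vtx.z i, Vtx.w i 1, Vtx.w i 2])
        ⟨[Vtx.z i, Vtx.w i 1, Vtx.w i 2], z_mem_C hi1 hd, Or.inr hwin, by simp, by simp,
          rfl, rfl, List.IsChain.cons_cons ezw (List.IsChain.cons_cons ew12 (List.isChain_singleton _)),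
          ?_, rfl⟩ hwin
      intro u hu
      simp at hu
      rw [hu]
      exact hnotS 1 le_rfl (by omega) h1
    · have h3 : (lit i 3).eval (Function.update σ n bb) = true := by
        rcases (by omega : j = 1 ∨ j = 2 ∨ j = 3) with rfl | rfl | rfl
        exacts [absurd hje h1, absurd hje h2, hje]
      have hwin : Vtx.w i 3 ∈ Rinv (Rrel lit m) E2 :=
        (w_rinv_iff hwf hn2 hi1 hd (by omega) (by omega)).2 h3
      refine MoverWins.winsNow
        (E' := E2 \ pathEdges [Vtx.z i, Vtx.w i 1, Vtx.w i 2, Vtx.w i 3])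
        ⟨[Vtx.z i, Vtx.w i 1, Vtx.w i 2, Vtx.w i 3], z_mem_C hi1 hd, Or.inr hwin, by simp,
          by simp, rfl, rfl,
          List.IsChain.cons_cons ezw (List.IsChain.cons_cons ew12
            (List.IsChain.cons_cons ew23 (List.isChain_singleton _))), ?_, rfl⟩ hwin
      intro u hu
      simp at hu
      rcases hu with rfl | rfl
      exacts [hnotS 1 le_rfl (by omega) h1, hnotS 2 (by omega) (by omega) h2]

end
section
variable {n m : ℕ} {lit : ℕ → ℕ → Lit}

lemma main_rec (hn : Even n) (hn2 : 2 ≤ n) (hm1 : 1 ≤ m) (hwf : LitWF n m lit) :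
    ∀ j, 1 ≤ j → ∀ k σ, k + j = n → QAux (FTrue lit m) (k+1) j σ →
      ((k % 2 = 0 →
          MoverWins (Cset n m) (Rrel lit m) true (Vtx.g k) (EG n m \ Del σ k)) ∧
       (k % 2 = 1 →
          MoverWins (Cset n m) (Rrel lit m) false (Vtx.g k) (EG n m \ Del σ k))) := by
  have hn0 : n % 2 = 0 := Nat.even_iff.1 hn
  intro j
  induction j with
  | zero => omega
  | succ j ih =>
    intro _ k σ hkj hQ
    simp only [QAux] at hQ
    rcases Nat.mod_two_eq_zero_or_one k with hk | hk
    · refine ⟨fun _ => ?_, fun h => by omega⟩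
      rw [if_pos (by omega : (k+1) % 2 = 1)] at hQ
      obtain ⟨bb, hQb⟩ := hQ
      have hj1 : 1 ≤ j := by omega
      have hmove := legal_gmove (n := n) (m := m) (lit := lit) (σ := σ) k bb (by omega)
      have hihr := (ih hj1 (k+1) (Function.update σ (k+1) bb) (by omega) hQb).2 (by omega)
      have hset : EG n m \ Del (Function.update σ (k+1) bb) (k+1) =
          (EG n m \ Del σ k) \ pathEdges (gpath (k+1) bb) := by
        rw [del_succ, ← Set.diff_diff]
      rw [hset] at hihr
      exact MoverWins.winsLater ⟨_, hmove⟩ hihr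
    · refine ⟨fun h => by omega, fun _ => ?_⟩
      rw [if_neg (by omega : ¬(k+1) % 2 = 1)] at hQ
      rcases Nat.eq_zero_or_pos j with rfl | hj1
      · obtain rfl : k = n - 1 := by omega
        refine MoverWins.loses ?_ ?_
        · rintro v E' ⟨p, hp⟩
          obtain ⟨bb, d, hd, hpeq, rfl, hE'⟩ := char_glast Set.diff_subset hn2 hm1 hp
          intro hRi
          obtain ⟨i', j', hzeq⟩ := mem_rinv_shape hRi
          simp at hzeq
        · rintro v E' ⟨p, hp⟩
          obtain ⟨bb, d, hd, hpeq, rfl, rfl⟩ := char_glast Set.diff_subset hn2 hm1 hp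
          have hF : FTrue lit m (Function.update σ n bb) := by
            have h' := hQ bb
            simp only [QAux] at h'
            rwa [show n - 1 + 1 = n from by omega] at h'
          exact final_move hwf hn2 hd hF
      · refine MoverWins.loses ?_ ?_
        · rintro v E' ⟨p, hp⟩
          obtain ⟨bb, hpe, rfl, hE'⟩ := char_gmid Set.diff_subset (by omega) hp
          intro hRi
          obtain ⟨i', j', hzeq⟩ := mem_rinv_shape hRi
          simp at hzeq
        · rintro v E' ⟨p, hp⟩
          obtain ⟨bb, hpe, rfl, rfl⟩ := char_gmid Set.diff_subset (by omega) hp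
          have hihr := (ih hj1 (k+1) (Function.update σ (k+1) bb) (by omega) (hQ bb)).1
            (by omega)
          have hset : EG n m \ Del (Function.update σ (k+1) bb) (k+1) =
              (EG n m \ Del σ k) \ pathEdges (gpath (k+1) bb) := by
            rw [del_succ, ← Set.diff_diff]
          rw [hset] at hihr
          exact hihr

end
/-- If the restricted quantified Boolean formula `Q` is true, then the
∃-player (who moves first, from `s = g₀`, with initial edge set `E(G)`) has a winning
strategy in the graph game on `(G, C, s, R)` constructed from `Q`. -/
theorem existsPlayer_wins_of_qbf_true
    (n m : ℕ) (hn : Even n) (hn2 : 2 ≤ n) (hm : 1 ≤ m)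
    (lit : ℕ → ℕ → Lit) (hwf : LitWF n m lit)
    (hQ : QTrue n m lit) :
    MoverWins (Cset n m) (Rrel lit m) true (Vtx.g 0) (EG n m) := by
  have h := (main_rec hn hn2 hm hwf n (by omega) 0 (fun _ => false) (by omega) hQ).1 rfl
  rwa [del_zero, Set.diff_empty] at h

end PhutballQBF
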